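/- arXiv:2102.09769 — 3 statements merged into one kernel-verified Lean document; each statement's English description precedes it below -/
import Mathlib

section
/- Let X = (x^(1),…,x^(N)) ∈ ℝ^{d×N} with labels y ∈ ℝ^N, and let u₊, u₋, v₊, v₋ : [0,∞) → ℝ^d be differentiable curves solving the gradient flow of the diagonal linear network loss, with unbiased initialization u₊(0) = u₋(0) and v₊(0) = v₋(0), and with u_{+,i}(0)² + v_{+,i}(0)² > 0 for every coordinate i. Set w̃(t) = u₊(t)∘v₊(t) − u₋(t)∘v₋(t) and k_i = 4(u_{+,i}(0)² + v_{+,i}(0)²)². If w̃(t) converges as t → ∞ to a limit w̃∞ satisfying Xᵀw̃∞ = y, then w̃∞ is the unique minimizer of Q(w) = Σ_{i=1}^d q_{k_i}(w_i) over the set {w ∈ ℝ^d : Xᵀw = y}. -/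
/-- The square loss of the two-layer diagonal linear network with untied weights:
`L(u₊,u₋,v₊,v₋) = (1/(2N)) Σₙ (yⁿ − (u₊∘v₊ − u₋∘v₋)ᵀxⁿ)²`. -/
noncomputable def diagLoss {d N : ℕ} (X : Fin N → EuclideanSpace ℝ (Fin d))
    (y : Fin N → ℝ) (uP uM vP vM : EuclideanSpace ℝ (Fin d)) : ℝ :=
  1 / (2 * N) * ∑ n, (y n - ∑ i, (uP i * vP i - uM i * vM i) * X n i) ^ 2

/-- The implicit regularizer `q_k` of the diagonal linear network. -/
noncomputable def qk (k x : ℝ) : ℝ :=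
  Real.sqrt k / 4 * (1 - Real.sqrt (1 + 4 * x ^ 2 / k)
    + 2 * x / Real.sqrt k * Real.arsinh (2 * x / Real.sqrt k))

lemma qk_hasDerivAt {k : ℝ} (hk : 0 < k) (x : ℝ) :
    HasDerivAt (qk k) (Real.arsinh (2 * x / Real.sqrt k) / 2) x := by
  have hsk : 0 < Real.sqrt k := Real.sqrt_pos.2 hk
  have hsk2 : Real.sqrt k ^ 2 = k := Real.sq_sqrt hk.le
  have hu : 0 < 1 + 4 * x ^ 2 / k := by positivity
  have hsu : 0 < Real.sqrt (1 + 4 * x ^ 2 / k) := Real.sqrt_pos.2 hu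
  have hsu2 : Real.sqrt (1 + 4 * x ^ 2 / k) ^ 2 = 1 + 4 * x ^ 2 / k := Real.sq_sqrt hu.le
  -- derivative of inner argument s(x) = 2x/√k
  have hs : HasDerivAt (fun x : ℝ => 2 * x / Real.sqrt k) (2 / Real.sqrt k) x := by
    simpa using ((hasDerivAt_id x).const_mul 2).div_const (Real.sqrt k)
  -- derivative of √(1+4x²/k)
  have h1 : HasDerivAt (fun x : ℝ => Real.sqrt (1 + 4 * x ^ 2 / k))
      (1 / (2 * Real.sqrt (1 + 4 * x ^ 2 / k)) * (8 * x / k)) x := by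
    have hin : HasDerivAt (fun x : ℝ => 1 + 4 * x ^ 2 / k) (8 * x / k) x := by
      have := (((hasDerivAt_pow 2 x).const_mul 4).div_const k).const_add 1
      simpa [mul_comm, mul_assoc] using this.congr_deriv (by ring)
    exact (Real.hasDerivAt_sqrt hu.ne').comp x hin
  -- derivative of arsinh(2x/√k)
  have h2 : HasDerivAt (fun x : ℝ => Real.arsinh (2 * x / Real.sqrt k))
      ((Real.sqrt (1 + (2 * x / Real.sqrt k) ^ 2))⁻¹ * (2 / Real.sqrt k)) x :=
    (Real.hasDerivAt_arsinh _).comp x hs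
  have h3 : HasDerivAt (fun x : ℝ => 2 * x / Real.sqrt k * Real.arsinh (2 * x / Real.sqrt k))
      (2 / Real.sqrt k * Real.arsinh (2 * x / Real.sqrt k)
        + 2 * x / Real.sqrt k * ((Real.sqrt (1 + (2 * x / Real.sqrt k) ^ 2))⁻¹ * (2 / Real.sqrt k))) x :=
    hs.mul h2
  have h4 : HasDerivAt (qk k)
      (Real.sqrt k / 4 * (0 - 1 / (2 * Real.sqrt (1 + 4 * x ^ 2 / k)) * (8 * x / k)
        + (2 / Real.sqrt k * Real.arsinh (2 * x / Real.sqrt k)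
        + 2 * x / Real.sqrt k * ((Real.sqrt (1 + (2 * x / Real.sqrt k) ^ 2))⁻¹ * (2 / Real.sqrt k))))) x := by
    unfold qk
    exact (((hasDerivAt_const x (1:ℝ)).sub h1).add h3).const_mul _
  convert h4 using 1
  have he : (2 * x / Real.sqrt k) ^ 2 = 4 * x ^ 2 / k := by
    field_simp
    nlinarith [hsk2]
  rw [he]
  set S := Real.sqrt (1 + 4 * x ^ 2 / k) with hS
  set R := Real.sqrt k with hR
  field_simp
  linear_combination (8*x) * hsk2

lemma qk_strict {k : ℝ} (hk : 0 < k) {a b : ℝ} (hab : a ≠ b) :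
    qk k a + Real.arsinh (2 * a / Real.sqrt k) / 2 * (b - a) < qk k b := by
  have hsk : 0 < Real.sqrt k := Real.sqrt_pos.2 hk
  have hcont : ∀ s t : ℝ, ContinuousOn (qk k) (Set.Icc s t) := fun s t =>
    fun x _ => ((qk_hasDerivAt hk x).continuousAt).continuousWithinAt
  rcases lt_or_gt_of_ne hab with h | h
  · obtain ⟨c, hc, hc2⟩ := exists_hasDerivAt_eq_slope (qk k)
      (fun x => Real.arsinh (2 * x / Real.sqrt k) / 2) h (hcont a b)
      (fun x _ => qk_hasDerivAt hk x)
    have hmono : Real.arsinh (2 * a / Real.sqrt k) < Real.arsinh (2 * c / Real.sqrt k) :=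
      Real.arsinh_lt_arsinh.2 (by have := hc.1; gcongr)
    have heq : qk k b - qk k a = Real.arsinh (2 * c / Real.sqrt k) / 2 * (b - a) := by
      have hba : b - a ≠ 0 := sub_ne_zero.2 h.ne'
      field_simp at hc2 ⊢
      linarith [hc2]
    nlinarith [heq, hmono, sub_pos.2 h]
  · obtain ⟨c, hc, hc2⟩ := exists_hasDerivAt_eq_slope (qk k)
      (fun x => Real.arsinh (2 * x / Real.sqrt k) / 2) h (hcont b a)
      (fun x _ => qk_hasDerivAt hk x)
    have hmono : Real.arsinh (2 * c / Real.sqrt k) < Real.arsinh (2 * a / Real.sqrt k) :=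
      Real.arsinh_lt_arsinh.2 (by have := hc.2; gcongr)
    have heq : qk k a - qk k b = Real.arsinh (2 * c / Real.sqrt k) / 2 * (a - b) := by
      have hba : a - b ≠ 0 := sub_ne_zero.2 h.ne'
      field_simp at hc2 ⊢
      linarith [hc2]
    nlinarith [heq, hmono, sub_pos.2 h]

lemma grad_aux {d N : ℕ} (X : Fin N → EuclideanSpace ℝ (Fin d)) (y : Fin N → ℝ)
    (c o a : EuclideanSpace ℝ (Fin d)) :
    HasGradientAt (fun u : EuclideanSpace ℝ (Fin d) =>
      1 / (2 * (N : ℝ)) * ∑ n, (y n - ∑ i, (u i * c i - o i) * X n i) ^ 2)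
      ((WithLp.toLp 2 fun i => -(1 / (N : ℝ)) * ∑ n, (y n - ∑ j, (a j * c j - o j) * X n j) * (c i * X n i) :
        EuclideanSpace ℝ (Fin d))) a := by
  classical
  have hB : ∀ n : Fin N, HasFDerivAt (fun u : EuclideanSpace ℝ (Fin d) =>
        ∑ i, (u i * c i - o i) * X n i)
      (∑ i, X n i • (c i • (EuclideanSpace.proj i : EuclideanSpace ℝ (Fin d) →L[ℝ] ℝ))) a := by
    intro n
    apply HasFDerivAt.fun_sum
    intro i _
    have h0 : HasFDerivAt (fun u : EuclideanSpace ℝ (Fin d) => u i)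
        (EuclideanSpace.proj i : EuclideanSpace ℝ (Fin d) →L[ℝ] ℝ) a :=
      (EuclideanSpace.proj (𝕜 := ℝ) i).hasFDerivAt
    exact ((h0.mul_const (c i)).sub_const (o i)).mul_const (X n i)
  have hsq : ∀ n : Fin N, HasFDerivAt (fun u : EuclideanSpace ℝ (Fin d) =>
        (y n - ∑ i, (u i * c i - o i) * X n i) ^ 2)
      ((y n - ∑ i, (a i * c i - o i) * X n i) •
          (-(∑ i, X n i • (c i • (EuclideanSpace.proj i : EuclideanSpace ℝ (Fin d) →L[ℝ] ℝ))))
        + (y n - ∑ i, (a i * c i - o i) * X n i) •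
          (-(∑ i, X n i • (c i • (EuclideanSpace.proj i : EuclideanSpace ℝ (Fin d) →L[ℝ] ℝ))))) a := by
    intro n
    have := (((hB n).const_sub (y n)).fun_mul ((hB n).const_sub (y n)))
    simpa [pow_two] using this
  have hF : HasFDerivAt (fun u : EuclideanSpace ℝ (Fin d) =>
      1 / (2 * (N : ℝ)) * ∑ n, (y n - ∑ i, (u i * c i - o i) * X n i) ^ 2)
      ((1 / (2 * (N : ℝ))) • ∑ n : Fin N,
        ((y n - ∑ i, (a i * c i - o i) * X n i) •
          (-(∑ i, X n i • (c i • (EuclideanSpace.proj i : EuclideanSpace ℝ (Fin d) →L[ℝ] ℝ))))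
        + (y n - ∑ i, (a i * c i - o i) * X n i) •
          (-(∑ i, X n i • (c i • (EuclideanSpace.proj i : EuclideanSpace ℝ (Fin d) →L[ℝ] ℝ)))))) a :=
    (HasFDerivAt.fun_sum fun n _ => hsq n).const_mul _
  rw [hasGradientAt_iff_hasFDerivAt]
  refine hF.congr_fderiv ?_
  symm
  apply ContinuousLinearMap.ext
  intro h
  have hproj : ∀ (i : Fin d) (x : EuclideanSpace ℝ (Fin d)),
      (EuclideanSpace.proj (𝕜 := ℝ) i) x = x i := fun _ _ => rfl
  simp only [InnerProductSpace.toDual_apply_apply, PiLp.inner_apply, RCLike.inner_apply, conj_trivial,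
    ContinuousLinearMap.smul_apply, ContinuousLinearMap.sum_apply, ContinuousLinearMap.neg_apply,
    ContinuousLinearMap.add_apply, smul_eq_mul, hproj, WithLp.ofLp_toLp]
  have h2 : 1 / (2 * (N : ℝ)) = 2⁻¹ * (N : ℝ)⁻¹ := by rw [one_div, mul_inv]
  have key : ∀ i : Fin d,
      (-(1 / (N : ℝ)) * ∑ n, (y n - ∑ j, (a j * c j - o j) * X n j) * (c i * X n i)) * h i
        = ∑ n, -((N : ℝ)⁻¹ * ((y n - ∑ j, (a j * c j - o j) * X n j) * (c i * X n i) * h i)) := by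
    intro i
    rw [mul_assoc, Finset.sum_mul, Finset.mul_sum]
    exact Finset.sum_congr rfl fun n _ => by rw [one_div]; ring
  have key2 : ∀ n : Fin N,
      1 / (2 * (N : ℝ)) *
        ((y n - ∑ j, (a j * c j - o j) * X n j) * -∑ i, X n i * (c i * h i)
          + (y n - ∑ j, (a j * c j - o j) * X n j) * -∑ i, X n i * (c i * h i))
        = ∑ i, -((N : ℝ)⁻¹ * ((y n - ∑ j, (a j * c j - o j) * X n j) * (c i * X n i) * h i)) := by
    intro n
    have e0 : ∀ r T : ℝ, 1 / (2 * (N : ℝ)) * (r * -T + r * -T) = -((N : ℝ)⁻¹ * (r * T)) := by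
      intro r T; rw [h2]; ring
    rw [e0, Finset.mul_sum, Finset.mul_sum, ← Finset.sum_neg_distrib]
    exact Finset.sum_congr rfl fun i _ => by ring
  rw [Finset.sum_congr rfl fun i _ => mul_comm (h i) _]
  rw [Finset.sum_congr rfl fun i _ => key i, Finset.mul_sum,
    Finset.sum_congr rfl fun n _ => key2 n, Finset.sum_comm]

noncomputable def Wf {d : ℕ} (uP uM vP vM : ℝ → EuclideanSpace ℝ (Fin d)) (i : Fin d)
    (t : ℝ) : ℝ :=
  uP t i * vP t i - uM t i * vM t i

noncomputable def Hf {d : ℕ} (uP uM vP vM : ℝ → EuclideanSpace ℝ (Fin d)) (i : Fin d)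
    (t : ℝ) : ℝ :=
  uP t i ^ 2 + vP t i ^ 2 + uM t i ^ 2 + vM t i ^ 2

lemma const_of_deriv {f f' : ℝ → ℝ} (hd : ∀ t, 0 ≤ t → HasDerivAt f (f' t) t)
    (hz : ∀ t, 0 ≤ t → f' t = 0) : ∀ t, 0 ≤ t → f t = f 0 := by
  intro t ht
  have hcont : ContinuousOn f (Set.Icc 0 t) := fun x hx =>
    ((hd x hx.1).continuousAt).continuousWithinAt
  exact constant_of_has_deriv_right_zero hcont (fun x hx => by
      have h := (hd x hx.1).hasDerivWithinAt (s := Set.Ici x)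
      rwa [hz x hx.1] at h) t (Set.right_mem_Icc.2 ht)

noncomputable def Gf {d N : ℕ} (X : Fin N → EuclideanSpace ℝ (Fin d)) (y : Fin N → ℝ)
    (uP uM vP vM : ℝ → EuclideanSpace ℝ (Fin d)) (i : Fin d) (t : ℝ) : ℝ :=
  1 / (N : ℝ) * ∑ n, (y n - ∑ j, (uP t j * vP t j - uM t j * vM t j) * X n j) * X n i

section
variable {d N : ℕ} (X : Fin N → EuclideanSpace ℝ (Fin d)) (y : Fin N → ℝ)
  (uP uM vP vM : ℝ → EuclideanSpace ℝ (Fin d))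

/-- coordinate derivatives of the four parameter curves -/
lemma coord_derivs
    (hflow : ∀ t, 0 ≤ t →
      HasDerivAt uP (-gradient (fun u => diagLoss X y u (uM t) (vP t) (vM t)) (uP t)) t ∧
      HasDerivAt uM (-gradient (fun u => diagLoss X y (uP t) u (vP t) (vM t)) (uM t)) t ∧
      HasDerivAt vP (-gradient (fun v => diagLoss X y (uP t) (uM t) v (vM t)) (vP t)) t ∧
      HasDerivAt vM (-gradient (fun v => diagLoss X y (uP t) (uM t) (vP t) v) (vM t)) t)
    (i : Fin d) (t : ℝ) (ht : 0 ≤ t) :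
    HasDerivAt (fun s => uP s i) (Gf X y uP uM vP vM i t * vP t i) t ∧
    HasDerivAt (fun s => vP s i) (Gf X y uP uM vP vM i t * uP t i) t ∧
    HasDerivAt (fun s => uM s i) (-(Gf X y uP uM vP vM i t * vM t i)) t ∧
    HasDerivAt (fun s => vM s i) (-(Gf X y uP uM vP vM i t * uM t i)) t := by
  obtain ⟨h1, h2, h3, h4⟩ := hflow t ht
  have hsum : ∀ q : ℝ, ∑ n, (y n - ∑ j, (uP t j * vP t j - uM t j * vM t j) * X n j) * (q * X n i)
      = q * ∑ n, (y n - ∑ j, (uP t j * vP t j - uM t j * vM t j) * X n j) * X n i := by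
    intro q; rw [Finset.mul_sum]; exact Finset.sum_congr rfl fun n _ => by ring
  have hres : ∀ (F : Fin d → ℝ), (∀ j, F j = uP t j * vP t j - uM t j * vM t j) →
      ∀ n : Fin N, (y n - ∑ j, F j * X n j)
        = (y n - ∑ j, (uP t j * vP t j - uM t j * vM t j) * X n j) := by
    intro F hF n
    rw [Finset.sum_congr rfl fun j _ => by rw [hF j]]
  refine ⟨?_, ?_, ?_, ?_⟩
  · -- uP
    have hg : gradient (fun u => diagLoss X y u (uM t) (vP t) (vM t)) (uP t)
        = ((WithLp.toLp 2 fun i => -(1 / (N : ℝ)) * ∑ n, (y n - ∑ j, (uP t j * vP t j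
            - (WithLp.toLp 2 fun j => uM t j * vM t j : EuclideanSpace ℝ (Fin d)) j) * X n j) * (vP t i * X n i) :
          EuclideanSpace ℝ (Fin d))) :=
      (grad_aux X y (vP t) (WithLp.toLp 2 fun j => uM t j * vM t j : EuclideanSpace ℝ (Fin d)) (uP t)).gradient
    rw [hg] at h1
    have hc : HasDerivAt (fun s => uP s i)
        (-((WithLp.toLp 2 fun i => -(1 / (N : ℝ)) * ∑ n, (y n - ∑ j, (uP t j * vP t j
            - (WithLp.toLp 2 fun j => uM t j * vM t j : EuclideanSpace ℝ (Fin d)) j) * X n j) * (vP t i * X n i) :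
          EuclideanSpace ℝ (Fin d)) i)) t :=
      (EuclideanSpace.proj (𝕜 := ℝ) i).hasFDerivAt.comp_hasDerivAt t h1
    refine hc.congr_deriv ?_
    show -(-(1 / (N : ℝ)) * ∑ n, _ * (vP t i * X n i)) = _
    rw [hsum (vP t i)]
    unfold Gf; ring
  · -- vP
    have hEq : (fun v => diagLoss X y (uP t) (uM t) v (vM t))
        = (fun v : EuclideanSpace ℝ (Fin d) => 1 / (2 * (N : ℝ)) * ∑ n,
            (y n - ∑ j, (v j * uP t j
              - (WithLp.toLp 2 fun j => uM t j * vM t j : EuclideanSpace ℝ (Fin d)) j) * X n j) ^ 2) := by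
      funext v
      simp only [diagLoss, WithLp.ofLp_toLp]
      congr 1
      refine Finset.sum_congr rfl fun n _ => ?_
      congr 2
      refine Finset.sum_congr rfl fun j _ => ?_
      ring
    have hg : gradient (fun v => diagLoss X y (uP t) (uM t) v (vM t)) (vP t)
        = ((WithLp.toLp 2 fun i => -(1 / (N : ℝ)) * ∑ n, (y n - ∑ j, (vP t j * uP t j
            - (WithLp.toLp 2 fun j => uM t j * vM t j : EuclideanSpace ℝ (Fin d)) j) * X n j) * (uP t i * X n i) :
          EuclideanSpace ℝ (Fin d))) := by
      rw [hEq]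
      exact (grad_aux X y (uP t) (WithLp.toLp 2 fun j => uM t j * vM t j : EuclideanSpace ℝ (Fin d))
        (vP t)).gradient
    rw [hg] at h3
    have hc : HasDerivAt (fun s => vP s i)
        (-((WithLp.toLp 2 fun i => -(1 / (N : ℝ)) * ∑ n, (y n - ∑ j, (vP t j * uP t j
            - (WithLp.toLp 2 fun j => uM t j * vM t j : EuclideanSpace ℝ (Fin d)) j) * X n j) * (uP t i * X n i) :
          EuclideanSpace ℝ (Fin d)) i)) t :=
      (EuclideanSpace.proj (𝕜 := ℝ) i).hasFDerivAt.comp_hasDerivAt t h3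
    refine hc.congr_deriv ?_
    show -(-(1 / (N : ℝ)) * ∑ n,
      (y n - ∑ j, (vP t j * uP t j - uM t j * vM t j) * X n j) * (uP t i * X n i)) = _
    simp only [hres (fun j => vP t j * uP t j - uM t j * vM t j) (fun j => by ring)]
    rw [hsum (uP t i)]
    unfold Gf; ring
  · -- uM
    have hEq : (fun u => diagLoss X y (uP t) u (vP t) (vM t))
        = (fun u : EuclideanSpace ℝ (Fin d) => 1 / (2 * (N : ℝ)) * ∑ n,
            (y n - ∑ j, (u j * (WithLp.toLp 2 fun j => -vM t j : EuclideanSpace ℝ (Fin d)) j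
              - (WithLp.toLp 2 fun j => -(uP t j * vP t j) : EuclideanSpace ℝ (Fin d)) j) * X n j) ^ 2) := by
      funext u
      simp only [diagLoss, WithLp.ofLp_toLp]
      congr 1
      refine Finset.sum_congr rfl fun n _ => ?_
      congr 2
      refine Finset.sum_congr rfl fun j _ => ?_
      ring
    have hg : gradient (fun u => diagLoss X y (uP t) u (vP t) (vM t)) (uM t)
        = ((WithLp.toLp 2 fun i => -(1 / (N : ℝ)) * ∑ n, (y n - ∑ j, (uM t j * (WithLp.toLp 2 fun j => -vM t j :
              EuclideanSpace ℝ (Fin d)) j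
            - (WithLp.toLp 2 fun j => -(uP t j * vP t j) : EuclideanSpace ℝ (Fin d)) j) * X n j)
              * ((WithLp.toLp 2 fun j => -vM t j : EuclideanSpace ℝ (Fin d)) i * X n i) :
          EuclideanSpace ℝ (Fin d))) := by
      rw [hEq]
      exact (grad_aux X y (WithLp.toLp 2 fun j => -vM t j : EuclideanSpace ℝ (Fin d))
        (WithLp.toLp 2 fun j => -(uP t j * vP t j) : EuclideanSpace ℝ (Fin d)) (uM t)).gradient
    rw [hg] at h2
    have hc : HasDerivAt (fun s => uM s i)
        (-((WithLp.toLp 2 fun i => -(1 / (N : ℝ)) * ∑ n, (y n - ∑ j, (uM t j * (WithLp.toLp 2 fun j => -vM t j :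
              EuclideanSpace ℝ (Fin d)) j
            - (WithLp.toLp 2 fun j => -(uP t j * vP t j) : EuclideanSpace ℝ (Fin d)) j) * X n j)
              * ((WithLp.toLp 2 fun j => -vM t j : EuclideanSpace ℝ (Fin d)) i * X n i) :
          EuclideanSpace ℝ (Fin d)) i)) t :=
      (EuclideanSpace.proj (𝕜 := ℝ) i).hasFDerivAt.comp_hasDerivAt t h2
    refine hc.congr_deriv ?_
    show -(-(1 / (N : ℝ)) * ∑ n,
      (y n - ∑ j, (uM t j * -vM t j - -(uP t j * vP t j)) * X n j) * (-vM t i * X n i)) = _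
    simp only [hres (fun j => uM t j * -vM t j - -(uP t j * vP t j)) (fun j => by ring)]
    rw [hsum (-vM t i)]
    unfold Gf; ring
  · -- vM
    have hEq : (fun v => diagLoss X y (uP t) (uM t) (vP t) v)
        = (fun v : EuclideanSpace ℝ (Fin d) => 1 / (2 * (N : ℝ)) * ∑ n,
            (y n - ∑ j, (v j * (WithLp.toLp 2 fun j => -uM t j : EuclideanSpace ℝ (Fin d)) j
              - (WithLp.toLp 2 fun j => -(uP t j * vP t j) : EuclideanSpace ℝ (Fin d)) j) * X n j) ^ 2) := by
      funext v
      simp only [diagLoss, WithLp.ofLp_toLp]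
      congr 1
      refine Finset.sum_congr rfl fun n _ => ?_
      congr 2
      refine Finset.sum_congr rfl fun j _ => ?_
      ring
    have hg : gradient (fun v => diagLoss X y (uP t) (uM t) (vP t) v) (vM t)
        = ((WithLp.toLp 2 fun i => -(1 / (N : ℝ)) * ∑ n, (y n - ∑ j, (vM t j * (WithLp.toLp 2 fun j => -uM t j :
              EuclideanSpace ℝ (Fin d)) j
            - (WithLp.toLp 2 fun j => -(uP t j * vP t j) : EuclideanSpace ℝ (Fin d)) j) * X n j)
              * ((WithLp.toLp 2 fun j => -uM t j : EuclideanSpace ℝ (Fin d)) i * X n i) :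
          EuclideanSpace ℝ (Fin d))) := by
      rw [hEq]
      exact (grad_aux X y (WithLp.toLp 2 fun j => -uM t j : EuclideanSpace ℝ (Fin d))
        (WithLp.toLp 2 fun j => -(uP t j * vP t j) : EuclideanSpace ℝ (Fin d)) (vM t)).gradient
    rw [hg] at h4
    have hc : HasDerivAt (fun s => vM s i)
        (-((WithLp.toLp 2 fun i => -(1 / (N : ℝ)) * ∑ n, (y n - ∑ j, (vM t j * (WithLp.toLp 2 fun j => -uM t j :
              EuclideanSpace ℝ (Fin d)) j
            - (WithLp.toLp 2 fun j => -(uP t j * vP t j) : EuclideanSpace ℝ (Fin d)) j) * X n j)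
              * ((WithLp.toLp 2 fun j => -uM t j : EuclideanSpace ℝ (Fin d)) i * X n i) :
          EuclideanSpace ℝ (Fin d)) i)) t :=
      (EuclideanSpace.proj (𝕜 := ℝ) i).hasFDerivAt.comp_hasDerivAt t h4
    refine hc.congr_deriv ?_
    show -(-(1 / (N : ℝ)) * ∑ n,
      (y n - ∑ j, (vM t j * -uM t j - -(uP t j * vP t j)) * X n j) * (-uM t i * X n i)) = _
    simp only [hres (fun j => vM t j * -uM t j - -(uP t j * vP t j)) (fun j => by ring)]
    rw [hsum (-uM t i)]
    unfold Gf; ring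


lemma WH_derivs
    (hflow : ∀ t, 0 ≤ t →
      HasDerivAt uP (-gradient (fun u => diagLoss X y u (uM t) (vP t) (vM t)) (uP t)) t ∧
      HasDerivAt uM (-gradient (fun u => diagLoss X y (uP t) u (vP t) (vM t)) (uM t)) t ∧
      HasDerivAt vP (-gradient (fun v => diagLoss X y (uP t) (uM t) v (vM t)) (vP t)) t ∧
      HasDerivAt vM (-gradient (fun v => diagLoss X y (uP t) (uM t) (vP t) v) (vM t)) t)
    (i : Fin d) (t : ℝ) (ht : 0 ≤ t) :
    HasDerivAt (Wf uP uM vP vM i) (Gf X y uP uM vP vM i t * Hf uP uM vP vM i t) t ∧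
    HasDerivAt (Hf uP uM vP vM i) (4 * Gf X y uP uM vP vM i t * Wf uP uM vP vM i t) t := by
  obtain ⟨h1, h2, h3, h4⟩ := coord_derivs X y uP uM vP vM hflow i t ht
  constructor
  · refine ((h1.mul h2).sub (h3.mul h4)).congr_deriv ?_
    simp only [Gf, Wf, Hf]; ring
  · refine ((((h1.pow 2).add (h2.pow 2)).add (h3.pow 2)).add (h4.pow 2)).congr_deriv ?_
    simp only [Gf, Wf, Hf]; ring

lemma conserve
    (hflow : ∀ t, 0 ≤ t →
      HasDerivAt uP (-gradient (fun u => diagLoss X y u (uM t) (vP t) (vM t)) (uP t)) t ∧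
      HasDerivAt uM (-gradient (fun u => diagLoss X y (uP t) u (vP t) (vM t)) (uM t)) t ∧
      HasDerivAt vP (-gradient (fun v => diagLoss X y (uP t) (uM t) v (vM t)) (vP t)) t ∧
      HasDerivAt vM (-gradient (fun v => diagLoss X y (uP t) (uM t) (vP t) v) (vM t)) t)
    (hu0 : uP 0 = uM 0) (hv0 : vP 0 = vM 0) (i : Fin d) :
    ∀ t, 0 ≤ t → Hf uP uM vP vM i t ^ 2 - 4 * Wf uP uM vP vM i t ^ 2
      = 4 * (uP 0 i ^ 2 + vP 0 i ^ 2) ^ 2 := by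
  intro t ht
  have hc : ∀ s, 0 ≤ s → Hf uP uM vP vM i s ^ 2 - 4 * Wf uP uM vP vM i s ^ 2
      = Hf uP uM vP vM i 0 ^ 2 - 4 * Wf uP uM vP vM i 0 ^ 2 := by
    apply const_of_deriv (f' := fun _ => (0 : ℝ))
    · intro s hs
      obtain ⟨hW, hH⟩ := WH_derivs X y uP uM vP vM hflow i s hs
      exact ((hH.pow 2).sub ((hW.pow 2).const_mul 4)).congr_deriv (by ring)
    · intro s _; rfl
  have humi : uM 0 i = uP 0 i := (congrArg (fun v : EuclideanSpace ℝ (Fin d) => v i) hu0).symm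
  have hvmi : vM 0 i = vP 0 i := (congrArg (fun v : EuclideanSpace ℝ (Fin d) => v i) hv0).symm
  rw [hc t ht]
  unfold Wf Hf
  rw [humi, hvmi]
  ring

lemma Hf_pos
    (hflow : ∀ t, 0 ≤ t →
      HasDerivAt uP (-gradient (fun u => diagLoss X y u (uM t) (vP t) (vM t)) (uP t)) t ∧
      HasDerivAt uM (-gradient (fun u => diagLoss X y (uP t) u (vP t) (vM t)) (uM t)) t ∧
      HasDerivAt vP (-gradient (fun v => diagLoss X y (uP t) (uM t) v (vM t)) (vP t)) t ∧
      HasDerivAt vM (-gradient (fun v => diagLoss X y (uP t) (uM t) (vP t) v) (vM t)) t)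
    (hu0 : uP 0 = uM 0) (hv0 : vP 0 = vM 0)
    (hpos : ∀ i : Fin d, 0 < uP 0 i ^ 2 + vP 0 i ^ 2) (i : Fin d) :
    ∀ t, 0 ≤ t → 0 < Hf uP uM vP vM i t := by
  intro t ht
  have hk : 0 < 4 * (uP 0 i ^ 2 + vP 0 i ^ 2) ^ 2 := by have := hpos i; positivity
  have hne : ∀ s, 0 ≤ s → Hf uP uM vP vM i s ≠ 0 := by
    intro s hs h0
    have hcs := conserve X y uP uM vP vM hflow hu0 hv0 i s hs
    rw [h0] at hcs
    nlinarith [sq_nonneg (Wf uP uM vP vM i s)]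
  have hH0 : 0 < Hf uP uM vP vM i 0 := by
    have := hpos i
    unfold Hf
    nlinarith [sq_nonneg (uM 0 i), sq_nonneg (vM 0 i)]
  by_contra hle
  push_neg at hle
  have hlt : Hf uP uM vP vM i t < 0 := lt_of_le_of_ne hle (hne t ht)
  have hcont : ContinuousOn (Hf uP uM vP vM i) (Set.Icc 0 t) := fun x hx =>
    ((WH_derivs X y uP uM vP vM hflow i x hx.1).2.continuousAt).continuousWithinAt
  obtain ⟨s, hs, hs0⟩ := intermediate_value_Icc' ht hcont ⟨hlt.le, hH0.le⟩
  exact hne s hs.1 hs0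

lemma phi_deriv
    (hflow : ∀ t, 0 ≤ t →
      HasDerivAt uP (-gradient (fun u => diagLoss X y u (uM t) (vP t) (vM t)) (uP t)) t ∧
      HasDerivAt uM (-gradient (fun u => diagLoss X y (uP t) u (vP t) (vM t)) (uM t)) t ∧
      HasDerivAt vP (-gradient (fun v => diagLoss X y (uP t) (uM t) v (vM t)) (vP t)) t ∧
      HasDerivAt vM (-gradient (fun v => diagLoss X y (uP t) (uM t) (vP t) v) (vM t)) t)
    (hu0 : uP 0 = uM 0) (hv0 : vP 0 = vM 0)
    (hpos : ∀ i : Fin d, 0 < uP 0 i ^ 2 + vP 0 i ^ 2) (i : Fin d) (t : ℝ) (ht : 0 ≤ t) :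
    HasDerivAt (fun s => Real.arsinh (2 * Wf uP uM vP vM i s /
        Real.sqrt (4 * (uP 0 i ^ 2 + vP 0 i ^ 2) ^ 2)))
      (2 * Gf X y uP uM vP vM i t) t := by
  have hk : 0 < 4 * (uP 0 i ^ 2 + vP 0 i ^ 2) ^ 2 := by have := hpos i; positivity
  set k := 4 * (uP 0 i ^ 2 + vP 0 i ^ 2) ^ 2 with hkdef
  have hsk : 0 < Real.sqrt k := Real.sqrt_pos.2 hk
  have hsk2 : Real.sqrt k ^ 2 = k := Real.sq_sqrt hk.le
  have hW := (WH_derivs X y uP uM vP vM hflow i t ht).1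
  have hin : HasDerivAt (fun s => 2 * Wf uP uM vP vM i s / Real.sqrt k)
      (2 * (Gf X y uP uM vP vM i t * Hf uP uM vP vM i t) / Real.sqrt k) t :=
    (hW.const_mul 2).div_const _
  have hcomp := (Real.hasDerivAt_arsinh _).comp t hin
  refine hcomp.congr_deriv ?_
  have hHpos := Hf_pos X y uP uM vP vM hflow hu0 hv0 hpos i t ht
  have hcons := conserve X y uP uM vP vM hflow hu0 hv0 i t ht
  have he : 1 + (2 * Wf uP uM vP vM i t / Real.sqrt k) ^ 2
      = (Hf uP uM vP vM i t / Real.sqrt k) ^ 2 := by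
    field_simp
    linear_combination hkdef - hcons + hsk2
  rw [he, Real.sqrt_sq (by positivity)]
  field_simp

end


/-- for gradient flow on a diagonal linear network with unbiased
initialization, if the end-to-end predictor `w̃(t) = u₊∘v₊ − u₋∘v₋` converges to an
interpolator `w̃∞`, then `w̃∞` is the unique minimizer of
`Q(w) = Σᵢ q_{kᵢ}(wᵢ)`, `kᵢ = 4(u₊ᵢ(0)² + v₊ᵢ(0)²)²`, over `{w : Xᵀw = y}`. -/
theorem stmt_0 {d N : ℕ} (X : Fin N → EuclideanSpace ℝ (Fin d)) (y : Fin N → ℝ)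
    (uP uM vP vM : ℝ → EuclideanSpace ℝ (Fin d))
    (hflow : ∀ t, 0 ≤ t →
      HasDerivAt uP (-gradient (fun u => diagLoss X y u (uM t) (vP t) (vM t)) (uP t)) t ∧
      HasDerivAt uM (-gradient (fun u => diagLoss X y (uP t) u (vP t) (vM t)) (uM t)) t ∧
      HasDerivAt vP (-gradient (fun v => diagLoss X y (uP t) (uM t) v (vM t)) (vP t)) t ∧
      HasDerivAt vM (-gradient (fun v => diagLoss X y (uP t) (uM t) (vP t) v) (vM t)) t)
    (hu0 : uP 0 = uM 0) (hv0 : vP 0 = vM 0)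
    (hpos : ∀ i : Fin d, 0 < uP 0 i ^ 2 + vP 0 i ^ 2)
    (wInf : EuclideanSpace ℝ (Fin d))
    (hconv : Filter.Tendsto
      (fun t => (WithLp.toLp 2 (fun i => uP t i * vP t i - uM t i * vM t i) : EuclideanSpace ℝ (Fin d)))
      Filter.atTop (nhds wInf))
    (hfit : ∀ n, ∑ i, X n i * wInf i = y n) :
    ∀ w : EuclideanSpace ℝ (Fin d),
      (∀ n, ∑ i, X n i * w i = y n) → w ≠ wInf →
      ∑ i, qk (4 * (uP 0 i ^ 2 + vP 0 i ^ 2) ^ 2) (wInf i) <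
        ∑ i, qk (4 * (uP 0 i ^ 2 + vP 0 i ^ 2) ^ 2) (w i) := by
  intro w hw hne
  classical
  have hk : ∀ i : Fin d, 0 < 4 * (uP 0 i ^ 2 + vP 0 i ^ 2) ^ 2 := fun i => by
    have := hpos i; positivity
  -- coordinatewise convergence of the predictor
  have hWt : ∀ i : Fin d, Filter.Tendsto (fun t => Wf uP uM vP vM i t)
      Filter.atTop (nhds (wInf i)) := by
    intro i
    exact ((EuclideanSpace.proj (𝕜 := ℝ) i).continuous.tendsto wInf).comp hconv
  -- constraint difference annihilates data
  have hΔ : ∀ n, ∑ i, X n i * (w i - wInf i) = 0 := by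
    intro n
    have e : ∑ i, X n i * (w i - wInf i) = (∑ i, X n i * w i) - ∑ i, X n i * wInf i := by
      rw [← Finset.sum_sub_distrib]
      exact Finset.sum_congr rfl fun i _ => by ring
    rw [e, hw n, hfit n, sub_self]
  have hW0 : ∀ i, Wf uP uM vP vM i 0 = 0 := by
    intro i
    simp only [Wf]
    rw [← hu0, ← hv0]
    ring
  -- the pairing stays 0 for all times
  have hψz : ∀ t, 0 ≤ t → (∑ i, Real.arsinh (2 * Wf uP uM vP vM i t /
      Real.sqrt (4 * (uP 0 i ^ 2 + vP 0 i ^ 2) ^ 2)) * (w i - wInf i)) = 0 := by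
    have hconst := const_of_deriv
      (f := fun t => ∑ i, Real.arsinh (2 * Wf uP uM vP vM i t /
        Real.sqrt (4 * (uP 0 i ^ 2 + vP 0 i ^ 2) ^ 2)) * (w i - wInf i))
      (f' := fun t => ∑ i, (2 * Gf X y uP uM vP vM i t) * (w i - wInf i))
      (fun t ht => HasDerivAt.fun_sum fun i _ =>
        (phi_deriv X y uP uM vP vM hflow hu0 hv0 hpos i t ht).mul_const _)
      ?_
    · intro t ht
      have h0 : (∑ i, Real.arsinh (2 * Wf uP uM vP vM i 0 /
          Real.sqrt (4 * (uP 0 i ^ 2 + vP 0 i ^ 2) ^ 2)) * (w i - wInf i)) = 0 := by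
        simp [hW0]
      exact (hconst t ht).trans h0
    · intro t _
      show (∑ i, 2 * Gf X y uP uM vP vM i t * (w i - wInf i)) = 0
      have e1 : ∀ i : Fin d, 2 * Gf X y uP uM vP vM i t * (w i - wInf i)
          = ∑ n, (2 * (1 / (N : ℝ)) * (y n - ∑ j, (uP t j * vP t j - uM t j * vM t j) * X n j))
              * (X n i * (w i - wInf i)) := by
        intro i
        simp only [Gf]
        rw [show (2 : ℝ) * (1 / (N : ℝ) *
            ∑ n, (y n - ∑ j, (uP t j * vP t j - uM t j * vM t j) * X n j) * X n i) * (w i - wInf i)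
          = (∑ n, (y n - ∑ j, (uP t j * vP t j - uM t j * vM t j) * X n j) * X n i)
              * (2 * (1 / (N : ℝ)) * (w i - wInf i)) from by ring, Finset.sum_mul]
        exact Finset.sum_congr rfl fun n _ => by ring
      rw [Finset.sum_congr rfl fun i _ => e1 i, Finset.sum_comm]
      rw [Finset.sum_congr rfl fun n (_ : n ∈ Finset.univ) => (Finset.mul_sum _ _ _).symm]
      simp [hΔ]
  -- pass to the limit
  have hψlim : Filter.Tendsto (fun t => ∑ i, Real.arsinh (2 * Wf uP uM vP vM i t /
      Real.sqrt (4 * (uP 0 i ^ 2 + vP 0 i ^ 2) ^ 2)) * (w i - wInf i)) Filter.atTop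
      (nhds (∑ i, Real.arsinh (2 * wInf i /
        Real.sqrt (4 * (uP 0 i ^ 2 + vP 0 i ^ 2) ^ 2)) * (w i - wInf i))) := by
    apply tendsto_finset_sum
    intro i _
    exact ((Real.continuous_arsinh.tendsto _).comp
      (((hWt i).const_mul 2).div_const _)).mul_const _
  have hev : (fun t => ∑ i, Real.arsinh (2 * Wf uP uM vP vM i t /
      Real.sqrt (4 * (uP 0 i ^ 2 + vP 0 i ^ 2) ^ 2)) * (w i - wInf i))
      =ᶠ[Filter.atTop] (fun _ => (0 : ℝ)) :=
    Filter.eventually_atTop.2 ⟨0, fun t ht => hψz t ht⟩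
  have hL : (∑ i, Real.arsinh (2 * wInf i /
      Real.sqrt (4 * (uP 0 i ^ 2 + vP 0 i ^ 2) ^ 2)) * (w i - wInf i)) = 0 :=
    tendsto_nhds_unique hψlim (Filter.Tendsto.congr' hev.symm tendsto_const_nhds)
  -- strict convexity
  obtain ⟨i0, hi0⟩ : ∃ i, w i ≠ wInf i := by
    by_contra hc; push_neg at hc; exact hne (PiLp.ext hc)
  have hle : ∀ i ∈ Finset.univ, qk (4 * (uP 0 i ^ 2 + vP 0 i ^ 2) ^ 2) (wInf i)
      + Real.arsinh (2 * wInf i / Real.sqrt (4 * (uP 0 i ^ 2 + vP 0 i ^ 2) ^ 2)) / 2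
        * (w i - wInf i)
      ≤ qk (4 * (uP 0 i ^ 2 + vP 0 i ^ 2) ^ 2) (w i) := by
    intro i _
    rcases eq_or_ne (w i) (wInf i) with h | h
    · rw [h]; simp
    · exact (qk_strict (hk i) h.symm).le
  have hstrict := Finset.sum_lt_sum hle
    ⟨i0, Finset.mem_univ i0, qk_strict (hk i0) hi0.symm⟩
  have hz2 : (∑ i, Real.arsinh (2 * wInf i /
      Real.sqrt (4 * (uP 0 i ^ 2 + vP 0 i ^ 2) ^ 2)) / 2 * (w i - wInf i)) = 0 := by
    have : (∑ i, Real.arsinh (2 * wInf i /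
        Real.sqrt (4 * (uP 0 i ^ 2 + vP 0 i ^ 2) ^ 2)) / 2 * (w i - wInf i))
        = (∑ i, Real.arsinh (2 * wInf i /
          Real.sqrt (4 * (uP 0 i ^ 2 + vP 0 i ^ 2) ^ 2)) * (w i - wInf i)) / 2 := by
      rw [Finset.sum_div]
      exact Finset.sum_congr rfl fun i _ => by ring
    rw [this, hL, zero_div]
  calc ∑ i, qk (4 * (uP 0 i ^ 2 + vP 0 i ^ 2) ^ 2) (wInf i)
      = ∑ i, (qk (4 * (uP 0 i ^ 2 + vP 0 i ^ 2) ^ 2) (wInf i)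
        + Real.arsinh (2 * wInf i / Real.sqrt (4 * (uP 0 i ^ 2 + vP 0 i ^ 2) ^ 2)) / 2
          * (w i - wInf i)) := by
        rw [Finset.sum_add_distrib, hz2, add_zero]
    _ < ∑ i, qk (4 * (uP 0 i ^ 2 + vP 0 i ^ 2) ^ 2) (w i) := hstrict
end

section
/- Along any gradient flow of the diagonal linear network loss, for each coordinate i the three quantities u_{+,i}(t)·u_{−,i}(t) + v_{+,i}(t)·v_{−,i}(t), v_{+,i}(t)² − u_{+,i}(t)², and v_{−,i}(t)² − u_{−,i}(t)² are constant in t (equal to their values at t = 0). -/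
open InnerProductSpace Finset

lemma gradient_coord {d : ℕ} {f : EuclideanSpace ℝ (Fin d) → ℝ}
    {D : EuclideanSpace ℝ (Fin d) →L[ℝ] ℝ} {x : EuclideanSpace ℝ (Fin d)}
    (h : HasFDerivAt f D x) (i : Fin d) :
    gradient f x i = D (EuclideanSpace.single i 1) := by
  have h2 := h.differentiableAt.hasGradientAt
  rw [hasGradientAt_iff_hasFDerivAt] at h2
  have hD := h.unique h2
  rw [hD, toDual_apply_apply, EuclideanSpace.inner_single_right]
  simp

lemma loss_grad_coord {d N : ℕ} (y : Fin N → ℝ) (a k : Fin N → Fin d → ℝ)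
    (x : EuclideanSpace ℝ (Fin d)) (i : Fin d) :
    gradient (fun u : EuclideanSpace ℝ (Fin d) =>
      1/(2*(N:ℝ)) * ∑ n, (y n - ∑ j, (u j * a n j + k n j))^2) x i
    = -(1/(N:ℝ) * ∑ n, (y n - ∑ j, (x j * a n j + k n j)) * a n i) := by
  set A : Fin N → (EuclideanSpace ℝ (Fin d) →L[ℝ] ℝ) :=
    fun n => ∑ j, a n j • (EuclideanSpace.proj j : EuclideanSpace ℝ (Fin d) →L[ℝ] ℝ) with hA
  have hAval : ∀ n (u : EuclideanSpace ℝ (Fin d)), A n u = ∑ j, u j * a n j := by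
    intro n u
    simp [hA, ContinuousLinearMap.sum_apply, mul_comm]
  have hinner : ∀ n : Fin N, HasFDerivAt
      (fun u : EuclideanSpace ℝ (Fin d) => y n - ∑ j, (u j * a n j + k n j))
      (-(A n)) x := by
    intro n
    have h1 : HasFDerivAt (fun u : EuclideanSpace ℝ (Fin d) => A n u + (∑ j, k n j))
        (A n) x := (A n).hasFDerivAt.add_const _
    have h2 := h1.const_sub (y n)
    refine h2.congr_of_eventuallyEq (Filter.Eventually.of_forall fun u => ?_)
    beta_reduce
    rw [hAval, Finset.sum_add_distrib]
  have hsq : ∀ n : Fin N, HasFDerivAt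
      (fun u : EuclideanSpace ℝ (Fin d) => (y n - ∑ j, (u j * a n j + k n j)) ^ 2)
      ((2 * (y n - ∑ j, (x j * a n j + k n j))) • (-(A n))) x := by
    intro n
    have h2 := (hinner n).mul (hinner n)
    have heq : (fun u : EuclideanSpace ℝ (Fin d) =>
        (y n - ∑ j, (u j * a n j + k n j)) ^ 2)
        = fun u => (y n - ∑ j, (u j * a n j + k n j)) *
            (y n - ∑ j, (u j * a n j + k n j)) := by
      funext u; ring
    rw [heq, show (2 * (y n - ∑ j, (x j * a n j + k n j))) • (-(A n))
        = (y n - ∑ j, (x j * a n j + k n j)) • (-(A n))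
          + (y n - ∑ j, (x j * a n j + k n j)) • (-(A n)) by rw [two_mul, add_smul]]
    exact h2
  have hsum := HasFDerivAt.fun_sum (fun n (_ : n ∈ Finset.univ) => hsq n)
  have hD := hsum.const_mul (1/(2*(N:ℝ)))
  rw [gradient_coord hD i]
  simp only [ContinuousLinearMap.coe_smul', Pi.smul_apply, ContinuousLinearMap.coe_sum',
    Finset.sum_apply, ContinuousLinearMap.neg_apply, smul_eq_mul]
  have hAe : ∀ n, A n (EuclideanSpace.single i 1) = a n i := by
    intro n
    rw [hAval]
    simp [EuclideanSpace.single_apply]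
  simp only [hAe]
  rcases Nat.eq_zero_or_pos N with hN | hN
  · subst hN; simp
  · have hN' : (N:ℝ) ≠ 0 := Nat.cast_ne_zero.mpr hN.ne'
    rw [Finset.mul_sum, Finset.mul_sum, ← Finset.sum_neg_distrib]
    refine Finset.sum_congr rfl fun n _ => ?_
    field_simp

lemma const_of_deriv_zero {f : ℝ → ℝ} (hf : ∀ s, 0 ≤ s → HasDerivAt f 0 s)
    {t : ℝ} (ht : 0 ≤ t) : f t = f 0 := by
  have := constant_of_has_deriv_right_zero (f := f) (a := 0) (b := t)
    (fun s hs => (hf s hs.1).continuousAt.continuousWithinAt)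
    (fun s hs => (hf s hs.1).hasDerivWithinAt)
  exact this t (Set.mem_Icc.mpr ⟨ht, le_refl t⟩)



/-- along any gradient flow of the diagonal linear network loss, the
coordinatewise quantities `u₊ᵢu₋ᵢ + v₊ᵢv₋ᵢ`, `v₊ᵢ² − u₊ᵢ²` and `v₋ᵢ² − u₋ᵢ²` are
conserved. -/
theorem stmt_1 {d N : ℕ} (X : Fin N → EuclideanSpace ℝ (Fin d)) (y : Fin N → ℝ)
    (uP uM vP vM : ℝ → EuclideanSpace ℝ (Fin d))
    (hflow : ∀ t, 0 ≤ t →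
      HasDerivAt uP (-gradient (fun u => diagLoss X y u (uM t) (vP t) (vM t)) (uP t)) t ∧
      HasDerivAt uM (-gradient (fun u => diagLoss X y (uP t) u (vP t) (vM t)) (uM t)) t ∧
      HasDerivAt vP (-gradient (fun v => diagLoss X y (uP t) (uM t) v (vM t)) (vP t)) t ∧
      HasDerivAt vM (-gradient (fun v => diagLoss X y (uP t) (uM t) (vP t) v) (vM t)) t) :
    ∀ t, 0 ≤ t → ∀ i : Fin d,
      uP t i * uM t i + vP t i * vM t i = uP 0 i * uM 0 i + vP 0 i * vM 0 i ∧
      vP t i ^ 2 - uP t i ^ 2 = vP 0 i ^ 2 - uP 0 i ^ 2 ∧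
      vM t i ^ 2 - uM t i ^ 2 = vM 0 i ^ 2 - uM 0 i ^ 2 := by
  intro t ht i
  set c : ℝ → ℝ := fun s =>
    1/(N:ℝ) * ∑ n, (y n - ∑ j, (uP s j * vP s j - uM s j * vM s j) * X n j) * X n i with hc
  have coord : ∀ s, 0 ≤ s →
      HasDerivAt (fun w => uP w i) (c s * vP s i) s ∧
      HasDerivAt (fun w => uM w i) (-(c s * vM s i)) s ∧
      HasDerivAt (fun w => vP w i) (c s * uP s i) s ∧
      HasDerivAt (fun w => vM w i) (-(c s * uM s i)) s := by
    intro s hs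
    obtain ⟨h1, h2, h3, h4⟩ := hflow s hs
    refine ⟨?_, ?_, ?_, ?_⟩
    · -- uP
      have hfun : (fun u : EuclideanSpace ℝ (Fin d) => diagLoss X y u (uM s) (vP s) (vM s))
          = fun u => 1/(2*(N:ℝ)) * ∑ n,
              (y n - ∑ j, (u j * (vP s j * X n j) + (-(uM s j * vM s j * X n j))))^2 := by
        funext u
        unfold diagLoss
        congr 1
        refine Finset.sum_congr rfl fun n _ => ?_
        congr 2
        exact Finset.sum_congr rfl fun j _ => by ring
      rw [hfun] at h1
      have h5 := ((EuclideanSpace.proj i : EuclideanSpace ℝ (Fin d) →L[ℝ] ℝ).hasFDerivAt).comp_hasDerivAt s h1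
      have key := loss_grad_coord y (fun n j => vP s j * X n j)
        (fun n j => -(uM s j * vM s j * X n j)) (uP s) i
      have hval : (EuclideanSpace.proj i : EuclideanSpace ℝ (Fin d) →L[ℝ] ℝ)
          (-gradient (fun u : EuclideanSpace ℝ (Fin d) => 1/(2*(N:ℝ)) * ∑ n,
              (y n - ∑ j, (u j * (vP s j * X n j) + (-(uM s j * vM s j * X n j))))^2) (uP s))
          = c s * vP s i := by
        have : (EuclideanSpace.proj i : EuclideanSpace ℝ (Fin d) →L[ℝ] ℝ)
            (-gradient (fun u : EuclideanSpace ℝ (Fin d) => 1/(2*(N:ℝ)) * ∑ n,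
              (y n - ∑ j, (u j * (vP s j * X n j) + (-(uM s j * vM s j * X n j))))^2) (uP s))
            = -(gradient (fun u : EuclideanSpace ℝ (Fin d) => 1/(2*(N:ℝ)) * ∑ n,
              (y n - ∑ j, (u j * (vP s j * X n j) + (-(uM s j * vM s j * X n j))))^2) (uP s) i) := by
          simp
        rw [this, key, neg_neg, hc]
        simp only []
        rw [Finset.mul_sum, Finset.mul_sum, Finset.sum_mul]
        refine Finset.sum_congr rfl fun n _ => ?_
        have hj : ∑ j, (uP s j * (vP s j * X n j) + (-(uM s j * vM s j * X n j)))
            = ∑ j, (uP s j * vP s j - uM s j * vM s j) * X n j :=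
          Finset.sum_congr rfl fun j _ => by ring
        rw [hj]; ring
      rw [hval] at h5
      exact h5
    · -- uM
      have hfun : (fun u : EuclideanSpace ℝ (Fin d) => diagLoss X y (uP s) u (vP s) (vM s))
          = fun u => 1/(2*(N:ℝ)) * ∑ n,
              (y n - ∑ j, (u j * (-(vM s j * X n j)) + (uP s j * vP s j * X n j)))^2 := by
        funext u
        unfold diagLoss
        congr 1
        refine Finset.sum_congr rfl fun n _ => ?_
        congr 2
        exact Finset.sum_congr rfl fun j _ => by ring
      rw [hfun] at h2
      have h5 := ((EuclideanSpace.proj i : EuclideanSpace ℝ (Fin d) →L[ℝ] ℝ).hasFDerivAt).comp_hasDerivAt s h2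
      have key := loss_grad_coord y (fun n j => -(vM s j * X n j))
        (fun n j => uP s j * vP s j * X n j) (uM s) i
      have hval : (EuclideanSpace.proj i : EuclideanSpace ℝ (Fin d) →L[ℝ] ℝ)
          (-gradient (fun u : EuclideanSpace ℝ (Fin d) => 1/(2*(N:ℝ)) * ∑ n,
              (y n - ∑ j, (u j * (-(vM s j * X n j)) + (uP s j * vP s j * X n j)))^2) (uM s))
          = -(c s * vM s i) := by
        have : (EuclideanSpace.proj i : EuclideanSpace ℝ (Fin d) →L[ℝ] ℝ)
            (-gradient (fun u : EuclideanSpace ℝ (Fin d) => 1/(2*(N:ℝ)) * ∑ n,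
              (y n - ∑ j, (u j * (-(vM s j * X n j)) + (uP s j * vP s j * X n j)))^2) (uM s))
            = -(gradient (fun u : EuclideanSpace ℝ (Fin d) => 1/(2*(N:ℝ)) * ∑ n,
              (y n - ∑ j, (u j * (-(vM s j * X n j)) + (uP s j * vP s j * X n j)))^2) (uM s) i) := by
          simp
        rw [this, key, neg_neg, hc]
        simp only [Finset.mul_sum, Finset.sum_mul, ← Finset.sum_neg_distrib]
        refine Finset.sum_congr rfl fun n _ => ?_
        have hj : ∑ j, (uM s j * (-(vM s j * X n j)) + (uP s j * vP s j * X n j))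
            = ∑ j, (uP s j * vP s j - uM s j * vM s j) * X n j :=
          Finset.sum_congr rfl fun j _ => by ring
        rw [hj]; ring
      rw [hval] at h5
      exact h5
    · -- vP
      have hfun : (fun v : EuclideanSpace ℝ (Fin d) => diagLoss X y (uP s) (uM s) v (vM s))
          = fun v => 1/(2*(N:ℝ)) * ∑ n,
              (y n - ∑ j, (v j * (uP s j * X n j) + (-(uM s j * vM s j * X n j))))^2 := by
        funext v
        unfold diagLoss
        congr 1
        refine Finset.sum_congr rfl fun n _ => ?_
        congr 2
        exact Finset.sum_congr rfl fun j _ => by ring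
      rw [hfun] at h3
      have h5 := ((EuclideanSpace.proj i : EuclideanSpace ℝ (Fin d) →L[ℝ] ℝ).hasFDerivAt).comp_hasDerivAt s h3
      have key := loss_grad_coord y (fun n j => uP s j * X n j)
        (fun n j => -(uM s j * vM s j * X n j)) (vP s) i
      have hval : (EuclideanSpace.proj i : EuclideanSpace ℝ (Fin d) →L[ℝ] ℝ)
          (-gradient (fun v : EuclideanSpace ℝ (Fin d) => 1/(2*(N:ℝ)) * ∑ n,
              (y n - ∑ j, (v j * (uP s j * X n j) + (-(uM s j * vM s j * X n j))))^2) (vP s))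
          = c s * uP s i := by
        have : (EuclideanSpace.proj i : EuclideanSpace ℝ (Fin d) →L[ℝ] ℝ)
            (-gradient (fun v : EuclideanSpace ℝ (Fin d) => 1/(2*(N:ℝ)) * ∑ n,
              (y n - ∑ j, (v j * (uP s j * X n j) + (-(uM s j * vM s j * X n j))))^2) (vP s))
            = -(gradient (fun v : EuclideanSpace ℝ (Fin d) => 1/(2*(N:ℝ)) * ∑ n,
              (y n - ∑ j, (v j * (uP s j * X n j) + (-(uM s j * vM s j * X n j))))^2) (vP s) i) := by
          simp
        rw [this, key, neg_neg, hc]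
        simp only [Finset.mul_sum, Finset.sum_mul, ← Finset.sum_neg_distrib]
        refine Finset.sum_congr rfl fun n _ => ?_
        have hj : ∑ j, (vP s j * (uP s j * X n j) + (-(uM s j * vM s j * X n j)))
            = ∑ j, (uP s j * vP s j - uM s j * vM s j) * X n j :=
          Finset.sum_congr rfl fun j _ => by ring
        rw [hj]; ring
      rw [hval] at h5
      exact h5
    · -- vM
      have hfun : (fun v : EuclideanSpace ℝ (Fin d) => diagLoss X y (uP s) (uM s) (vP s) v)
          = fun v => 1/(2*(N:ℝ)) * ∑ n,
              (y n - ∑ j, (v j * (-(uM s j * X n j)) + (uP s j * vP s j * X n j)))^2 := by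
        funext v
        unfold diagLoss
        congr 1
        refine Finset.sum_congr rfl fun n _ => ?_
        congr 2
        exact Finset.sum_congr rfl fun j _ => by ring
      rw [hfun] at h4
      have h5 := ((EuclideanSpace.proj i : EuclideanSpace ℝ (Fin d) →L[ℝ] ℝ).hasFDerivAt).comp_hasDerivAt s h4
      have key := loss_grad_coord y (fun n j => -(uM s j * X n j))
        (fun n j => uP s j * vP s j * X n j) (vM s) i
      have hval : (EuclideanSpace.proj i : EuclideanSpace ℝ (Fin d) →L[ℝ] ℝ)
          (-gradient (fun v : EuclideanSpace ℝ (Fin d) => 1/(2*(N:ℝ)) * ∑ n,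
              (y n - ∑ j, (v j * (-(uM s j * X n j)) + (uP s j * vP s j * X n j)))^2) (vM s))
          = -(c s * uM s i) := by
        have : (EuclideanSpace.proj i : EuclideanSpace ℝ (Fin d) →L[ℝ] ℝ)
            (-gradient (fun v : EuclideanSpace ℝ (Fin d) => 1/(2*(N:ℝ)) * ∑ n,
              (y n - ∑ j, (v j * (-(uM s j * X n j)) + (uP s j * vP s j * X n j)))^2) (vM s))
            = -(gradient (fun v : EuclideanSpace ℝ (Fin d) => 1/(2*(N:ℝ)) * ∑ n,
              (y n - ∑ j, (v j * (-(uM s j * X n j)) + (uP s j * vP s j * X n j)))^2) (vM s) i) := by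
          simp
        rw [this, key, neg_neg, hc]
        simp only [Finset.mul_sum, Finset.sum_mul, ← Finset.sum_neg_distrib]
        refine Finset.sum_congr rfl fun n _ => ?_
        have hj : ∑ j, (vM s j * (-(uM s j * X n j)) + (uP s j * vP s j * X n j))
            = ∑ j, (uP s j * vP s j - uM s j * vM s j) * X n j :=
          Finset.sum_congr rfl fun j _ => by ring
        rw [hj]; ring
      rw [hval] at h5
      exact h5
  have hQ1 : ∀ s, 0 ≤ s →
      HasDerivAt (fun w => uP w i * uM w i + vP w i * vM w i) 0 s := by
    intro s hs
    obtain ⟨huP, huM, hvP, hvM⟩ := coord s hs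
    have h := (huP.fun_mul huM).fun_add (hvP.fun_mul hvM)
    refine h.congr_deriv ?_
    ring
  have hQ2 : ∀ s, 0 ≤ s → HasDerivAt (fun w => vP w i ^ 2 - uP w i ^ 2) 0 s := by
    intro s hs
    obtain ⟨huP, huM, hvP, hvM⟩ := coord s hs
    have h := (hvP.fun_pow 2).fun_sub (huP.fun_pow 2)
    refine h.congr_deriv ?_
    ring
  have hQ3 : ∀ s, 0 ≤ s → HasDerivAt (fun w => vM w i ^ 2 - uM w i ^ 2) 0 s := by
    intro s hs
    obtain ⟨huP, huM, hvP, hvM⟩ := coord s hs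
    have h := (hvM.fun_pow 2).fun_sub (huM.fun_pow 2)
    refine h.congr_deriv ?_
    ring
  exact ⟨const_of_deriv_zero hQ1 ht, const_of_deriv_zero hQ2 ht, const_of_deriv_zero hQ3 ht⟩
end

section
/- Let d ≥ 2 and define H : ℝ^d∖{0} → ℝ^{d×d} by H(w) = (1/‖w‖)·(I − wwᵀ/(2‖w‖²)). Then there is no three-times continuously differentiable function Q : ℝ^d∖{0} → ℝ whose Hessian satisfies ∇²Q(w) = H(w) for all w ≠ 0. -/
open EuclideanSpace Real

/-- for `d ≥ 2`, the matrix field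
`H(w) = (1/‖w‖)(I − wwᵀ/(2‖w‖²))` on `ℝ^d ∖ {0}` is not the Hessian of any
three-times continuously differentiable function `Q` on `ℝ^d ∖ {0}`. -/
theorem stmt_7 {d : ℕ} (hd : 2 ≤ d) :
    ¬ ∃ Q : EuclideanSpace ℝ (Fin d) → ℝ,
      ContDiffOn ℝ 3 Q {w : EuclideanSpace ℝ (Fin d) | w ≠ 0} ∧
      ∀ w : EuclideanSpace ℝ (Fin d), w ≠ 0 → ∀ i j : Fin d,
        iteratedFDerivWithin ℝ 2 Q {w : EuclideanSpace ℝ (Fin d) | w ≠ 0} w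
            ![EuclideanSpace.single i (1 : ℝ), EuclideanSpace.single j (1 : ℝ)] =
          1 / ‖w‖ * ((if i = j then (1 : ℝ) else 0) - w i * w j / (2 * ‖w‖ ^ 2)) := by
  rintro ⟨Q, hQ, hH⟩
  set s : Set (EuclideanSpace ℝ (Fin d)) := {w | w ≠ 0} with hs_def
  have hs_open : IsOpen s := isOpen_ne
  set i0 : Fin d := ⟨0, by omega⟩ with hi0
  set i1 : Fin d := ⟨1, by omega⟩ with hi1
  have hne : i0 ≠ i1 := by simp [hi0, hi1, Fin.ext_iff]
  set E₀ : EuclideanSpace ℝ (Fin d) := EuclideanSpace.single i0 (1:ℝ) with hE0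
  set E₁ : EuclideanSpace ℝ (Fin d) := EuclideanSpace.single i1 (1:ℝ) with hE1
  set w₀ : EuclideanSpace ℝ (Fin d) := E₀ + E₁ with hw0def
  have hw₀ : w₀ ∈ s := by
    intro h0
    have : w₀ i0 = 0 := by rw [h0]; rfl
    simp only [hw0def, hE0, hE1] at this
    rw [show ((single i0 1 + single i1 1 : EuclideanSpace ℝ (Fin d)) i0) = 1 + 0 by
      simp [EuclideanSpace.single_apply, hne]] at this
    norm_num at this
  -- step 1: translate hypothesis to plain fderiv
  have hfd2 : ∀ w ∈ s, ∀ i j : Fin d,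
      fderiv ℝ (fderiv ℝ Q) w (EuclideanSpace.single i (1:ℝ)) (EuclideanSpace.single j (1:ℝ)) =
        1 / ‖w‖ * ((if i = j then (1 : ℝ) else 0) - w i * w j / (2 * ‖w‖ ^ 2)) := by
    intro w hw i j
    have h := hH w hw i j
    rw [iteratedFDerivWithin_two_apply Q hs_open.uniqueDiffOn hw,
      fderivWithin_fderivWithin_eq_of_mem_nhds (hs_open.mem_nhds hw)] at h
    simpa using h
  -- differentiability facts
  have hQat : ∀ w ∈ s, ContDiffAt ℝ 3 Q w := fun w hw => hQ.contDiffAt (hs_open.mem_nhds hw)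
  set ψ : EuclideanSpace ℝ (Fin d) → ℝ := fun w => fderiv ℝ Q w E₀ with hψdef
  have hfQ : ∀ w ∈ s, ContDiffAt ℝ 2 (fderiv ℝ Q) w := fun w hw =>
    (hQat w hw).fderiv_right (by norm_num)
  have hψC2 : ∀ w ∈ s, ContDiffAt ℝ 2 ψ w := fun w hw =>
    ((ContinuousLinearMap.apply ℝ ℝ E₀).contDiff.contDiffAt).comp w (hfQ w hw)
  have hψd : ∀ w ∈ s, HasFDerivAt ψ
      ((ContinuousLinearMap.apply ℝ ℝ E₀).comp (fderiv ℝ (fderiv ℝ Q) w)) w := by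
    intro w hw
    exact (ContinuousLinearMap.apply ℝ ℝ E₀).hasFDerivAt.comp w
      (((hfQ w hw).differentiableAt (by norm_num)).hasFDerivAt)
  have hψfd : ∀ w ∈ s, ∀ u, fderiv ℝ ψ w u = fderiv ℝ (fderiv ℝ Q) w u E₀ := by
    intro w hw u
    rw [(hψd w hw).fderiv]; rfl
  -- explicit candidate functions
  set φA : EuclideanSpace ℝ (Fin d) → ℝ :=
    fun w => 1 / ‖w‖ * ((1:ℝ) - w i0 * w i0 / (2 * ‖w‖ ^ 2)) with hφAdef
  set φB : EuclideanSpace ℝ (Fin d) → ℝ :=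
    fun w => 1 / ‖w‖ * ((0:ℝ) - w i1 * w i0 / (2 * ‖w‖ ^ 2)) with hφBdef
  have hA_eq : ∀ w ∈ s, fderiv ℝ ψ w E₀ = φA w := by
    intro w hw
    rw [hψfd w hw, hE0, hfd2 w hw i0 i0, if_pos rfl]
  have hB_eq : ∀ w ∈ s, fderiv ℝ ψ w E₁ = φB w := by
    intro w hw
    rw [hψfd w hw, hE1, hE0, hfd2 w hw i1 i0, if_neg (Ne.symm hne)]
  -- second derivative of ψ and symmetry
  have hDfψ : DifferentiableAt ℝ (fderiv ℝ ψ) w₀ :=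
    (((hψC2 w₀ hw₀).fderiv_right (m := 1) (by norm_num)).differentiableAt (by norm_num))
  have hsym : fderiv ℝ (fderiv ℝ ψ) w₀ E₁ E₀ = fderiv ℝ (fderiv ℝ ψ) w₀ E₀ E₁ :=
    ((hψC2 w₀ hw₀).isSymmSndFDerivAt (by simp [minSmoothness_of_isRCLikeNormedField])) E₁ E₀
  -- identify second derivative entries with derivatives of φA, φB
  have hevalfd : ∀ v : EuclideanSpace ℝ (Fin d),
      fderiv ℝ (fun w => fderiv ℝ ψ w v) w₀ =
        (ContinuousLinearMap.apply ℝ ℝ v).comp (fderiv ℝ (fderiv ℝ ψ) w₀) := by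
    intro v
    exact ((ContinuousLinearMap.apply ℝ ℝ v).hasFDerivAt.comp w₀ hDfψ.hasFDerivAt).fderiv
  have hdiffev : ∀ v : EuclideanSpace ℝ (Fin d),
      DifferentiableAt ℝ (fun w => fderiv ℝ ψ w v) w₀ := by
    intro v
    exact ((ContinuousLinearMap.apply ℝ ℝ v).hasFDerivAt.comp w₀ hDfψ.hasFDerivAt).differentiableAt
  have heqA : (fun w => fderiv ℝ ψ w E₀) =ᶠ[nhds w₀] φA :=
    Filter.eventuallyEq_of_mem (hs_open.mem_nhds hw₀) (fun w hw => hA_eq w hw)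
  have heqB : (fun w => fderiv ℝ ψ w E₁) =ᶠ[nhds w₀] φB :=
    Filter.eventuallyEq_of_mem (hs_open.mem_nhds hw₀) (fun w hw => hB_eq w hw)
  have hkey : fderiv ℝ φA w₀ E₁ = fderiv ℝ φB w₀ E₀ := by
    rw [← heqA.fderiv_eq, ← heqB.fderiv_eq, hevalfd E₀, hevalfd E₁]
    exact hsym
  have hdiffA : DifferentiableAt ℝ φA w₀ := (hdiffev E₀).congr_of_eventuallyEq heqA.symm
  have hdiffB : DifferentiableAt ℝ φB w₀ := (hdiffev E₁).congr_of_eventuallyEq heqB.symm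
  -- norm and coordinate computations
  have hnorm : ∀ a b : ℝ, ‖(EuclideanSpace.single i0 a + EuclideanSpace.single i1 b :
      EuclideanSpace ℝ (Fin d))‖ = Real.sqrt (a^2 + b^2) := by
    intro a b
    have hinner : (inner ℝ (EuclideanSpace.single i0 a) (EuclideanSpace.single i1 b) : ℝ) = 0 := by
      rw [EuclideanSpace.inner_single_left]
      simp [EuclideanSpace.single_apply, hne]
    have hsq : ‖(EuclideanSpace.single i0 a + EuclideanSpace.single i1 b :
        EuclideanSpace ℝ (Fin d))‖^2 = a^2 + b^2 := by
      rw [norm_add_sq_real, hinner, EuclideanSpace.norm_single, EuclideanSpace.norm_single]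
      simp [sq_abs]
    rw [← hsq, Real.sqrt_sq (norm_nonneg _)]
  have hcoord0 : ∀ a b : ℝ, (EuclideanSpace.single i0 a + EuclideanSpace.single i1 b :
      EuclideanSpace ℝ (Fin d)) i0 = a := by
    intro a b
    have : (EuclideanSpace.single i0 a + EuclideanSpace.single i1 b :
        EuclideanSpace ℝ (Fin d)) i0 = EuclideanSpace.single i0 a i0 +
          EuclideanSpace.single i1 b i0 := rfl
    rw [this]
    simp [EuclideanSpace.single_apply, hne]
  have hcoord1 : ∀ a b : ℝ, (EuclideanSpace.single i0 a + EuclideanSpace.single i1 b :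
      EuclideanSpace ℝ (Fin d)) i1 = b := by
    intro a b
    have : (EuclideanSpace.single i0 a + EuclideanSpace.single i1 b :
        EuclideanSpace ℝ (Fin d)) i1 = EuclideanSpace.single i0 a i1 +
          EuclideanSpace.single i1 b i1 := rfl
    rw [this]
    simp [EuclideanSpace.single_apply, hne.symm]
  have hlineA : ∀ t : ℝ, w₀ + t • E₁ = (EuclideanSpace.single i0 (1:ℝ) +
      EuclideanSpace.single i1 (1+t) : EuclideanSpace ℝ (Fin d)) := by
    intro t
    ext j
    show (EuclideanSpace.single i0 (1:ℝ)) j + (EuclideanSpace.single i1 (1:ℝ)) j +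
        t * (EuclideanSpace.single i1 (1:ℝ)) j = _
    show _ = (EuclideanSpace.single i0 (1:ℝ)) j + (EuclideanSpace.single i1 (1+t)) j
    simp only [EuclideanSpace.single_apply]
    by_cases h : j = i1 <;> simp [h] <;> ring
  have hlineB : ∀ t : ℝ, w₀ + t • E₀ = (EuclideanSpace.single i0 (1+t) +
      EuclideanSpace.single i1 (1:ℝ) : EuclideanSpace ℝ (Fin d)) := by
    intro t
    ext j
    show (EuclideanSpace.single i0 (1:ℝ)) j + (EuclideanSpace.single i1 (1:ℝ)) j +
        t * (EuclideanSpace.single i0 (1:ℝ)) j = _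
    show _ = (EuclideanSpace.single i0 (1+t)) j + (EuclideanSpace.single i1 (1:ℝ)) j
    simp only [EuclideanSpace.single_apply]
    by_cases h : j = i0 <;> simp [h] <;> ring
  -- compose with the lines
  have hlineDA : HasDerivAt (fun t : ℝ => w₀ + t • E₁) E₁ 0 := by
    simpa using ((hasDerivAt_id' (x := (0:ℝ))).smul_const E₁).const_add w₀
  have hlineDB : HasDerivAt (fun t : ℝ => w₀ + t • E₀) E₀ 0 := by
    simpa using ((hasDerivAt_id' (x := (0:ℝ))).smul_const E₀).const_add w₀
  have hcompA : HasDerivAt (fun t : ℝ => φA (w₀ + t • E₁)) (fderiv ℝ φA w₀ E₁) 0 := by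
    have h := (hdiffA.hasFDerivAt).comp_hasDerivAt_of_eq 0 hlineDA (by simp)
    exact h
  have hcompB : HasDerivAt (fun t : ℝ => φB (w₀ + t • E₀)) (fderiv ℝ φB w₀ E₀) 0 := by
    have h := (hdiffB.hasFDerivAt).comp_hasDerivAt_of_eq 0 hlineDB (by simp)
    exact h
  -- explicit one-dimensional functions
  set FA : ℝ → ℝ := fun t => (Real.sqrt (1 + (1+t)^2))⁻¹ * (1 - 1*1/(2*(1 + (1+t)^2)))
    with hFAdef
  set FB : ℝ → ℝ := fun t => (Real.sqrt ((1+t)^2 + 1))⁻¹ * (0 - 1*(1+t)/(2*((1+t)^2 + 1)))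
    with hFBdef
  have hFAeq : (fun t : ℝ => φA (w₀ + t • E₁)) = FA := by
    funext t
    rw [hlineA t, hφAdef, hFAdef]
    simp only
    rw [hcoord0 1 (1+t), hnorm 1 (1+t), Real.sq_sqrt (by positivity), one_div]
    norm_num
  have hFBeq : (fun t : ℝ => φB (w₀ + t • E₀)) = FB := by
    funext t
    rw [hlineB t, hφBdef, hFBdef]
    simp only
    rw [hcoord0 (1+t) 1, hcoord1 (1+t) 1, hnorm (1+t) 1, Real.sq_sqrt (by positivity), one_div]
    norm_num
  rw [hFAeq] at hcompA
  rw [hFBeq] at hcompB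
  -- explicit derivatives
  have hid : HasDerivAt (fun t : ℝ => 1 + t) 1 0 := (hasDerivAt_id' (x := (0:ℝ))).const_add 1
  have hq : HasDerivAt (fun t : ℝ => 1 + (1+t)^2) ((2:ℕ) * (1+(0:ℝ))^(2-1) * 1) 0 :=
    (hid.pow 2).const_add 1
  have hp : HasDerivAt (fun t : ℝ => (1+t)^2 + 1) ((2:ℕ) * (1+(0:ℝ))^(2-1) * 1) 0 :=
    (hid.pow 2).add_const 1
  have hexpA := ((hq.sqrt (by norm_num)).inv (by
      norm_num [Real.sqrt_ne_zero'])).mul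
    (((hasDerivAt_const (0:ℝ) ((1:ℝ)*1)).div (hq.const_mul 2) (by norm_num)).const_sub 1)
  have hexpB := ((hp.sqrt (by norm_num)).inv (by
      norm_num [Real.sqrt_ne_zero'])).mul
    (((hid.const_mul 1).div (hp.const_mul 2) (by norm_num)).const_sub 0)
  have hu1 := hcompA.unique hexpA
  have hu2 := hcompB.unique hexpB
  have hfinal := hkey
  rw [hu1, hu2] at hfinal
  have hs2 : (0:ℝ) < Real.sqrt 2 := Real.sqrt_pos.mpr (by norm_num)
  have hsq2 : Real.sqrt 2 ^ 2 = 2 := Real.sq_sqrt (by norm_num)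
  have hne2 : Real.sqrt 2 ≠ 0 := ne_of_gt hs2
  norm_num at hfinal
  field_simp at hfinal
  nlinarith [hfinal, hsq2, hs2]
end
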